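/- If S is a compact set in R^2 whose volume function satisfies V(r) = mu(S) + L_0 r + pi r^2 for 0 <= r < R (with L_0 > 0), then the distance D = dist(X,S) from a uniform point X on B(S,R)\setminus S is absolutely continuous with density f(r) = (L_0 + 2 pi r)/(L_0 R + pi R^2) on [0,R). -/

import Mathlib

open Real MeasureTheory Metric Set Filter
open scoped NNReal ENNReal Pointwise RealInnerProductSpace Topology

lemma lipschitzWith_image_null {E : Type*} [NormedAddCommGroup E] [NormedSpace ℝ E]
    [FiniteDimensional ℝ E] [MeasurableSpace E] [BorelSpace E]
    (μ : Measure E) [μ.IsAddHaarMeasure] {f : E → E} {K : ℝ≥0}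
    (hf : LipschitzWith K f) {s : Set E} (hs : μ s = 0) : μ (f '' s) = 0 := by
  set m : ℝ≥0 := Real.toNNReal |(0 : E →L[ℝ] E).det| + 1 with hm
  have hdet : ENNReal.ofReal |(0 : E →L[ℝ] E).det| < (m : ℝ≥0∞) := by
    rw [ENNReal.ofReal, hm]
    exact_mod_cast lt_add_one _
  obtain ⟨δ, hδ, δpos⟩ : ∃ δ : ℝ≥0, (∀ (t : Set E) (g : E → E),
      ApproximatesLinearOn g (0 : E →L[ℝ] E) t δ → μ (g '' t) ≤ (m : ℝ≥0∞) * μ t) ∧ 0 < δ := by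
    have h := (MeasureTheory.addHaar_image_le_mul_of_det_lt μ (0 : E →L[ℝ] E) hdet).and
      self_mem_nhdsWithin
    rcases h.exists with ⟨δ, h1, h2⟩
    exact ⟨δ, fun t g hg => h1 t g hg, h2⟩
  set c : ℝ≥0 := δ / (K + 1) with hc
  have hcpos : 0 < c := by
    rw [hc]
    positivity
  have hcK : c * K < δ := by
    rw [hc, div_mul_eq_mul_div]
    rw [div_lt_iff₀ (by positivity)]
    exact mul_lt_mul_of_pos_left (lt_add_one K) δpos
  set t : Set E := ((c : ℝ))⁻¹ • s with ht
  have hts : (c : ℝ) • t = s := by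
    rw [ht, smul_smul, mul_inv_cancel₀ (by exact_mod_cast hcpos.ne'), one_smul]
  have himg : f '' s = (fun x => f ((c : ℝ) • x)) '' t := by
    rw [← hts, ← Set.image_smul, Set.image_image]
  have happrox : ApproximatesLinearOn (fun x => f ((c : ℝ) • x)) (0 : E →L[ℝ] E) t (c * K) := by
    intro x hx y hy
    simp only [ContinuousLinearMap.zero_apply, sub_zero]
    have := hf.dist_le_mul ((c : ℝ) • x) ((c : ℝ) • y)
    rw [dist_eq_norm, dist_eq_norm, ← smul_sub, norm_smul] at this
    calc ‖f ((c:ℝ) • x) - f ((c:ℝ) • y)‖ ≤ K * (‖(c:ℝ)‖ * ‖x - y‖) := this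
    _ = (c * K : ℝ≥0) * ‖x - y‖ := by
        rw [NNReal.norm_eq]
        push_cast
        ring
  have happrox' : ApproximatesLinearOn (fun x => f ((c : ℝ) • x)) (0 : E →L[ℝ] E) t δ :=
    happrox.mono_num hcK.le
  have htnull : μ t = 0 := by
    rw [ht, Measure.addHaar_smul, hs, mul_zero]
  have hfin := hδ t _ happrox'
  rw [htnull, mul_zero] at hfin
  rw [himg]
  exact le_antisymm hfin zero_le

lemma midpoint_expand {E : Type*} [NormedAddCommGroup E] [InnerProductSpace ℝ E]
    (x1 x2 s1 s2 : E) (h1 : dist x1 s1 ≤ dist x1 s2) (h2 : dist x2 s2 ≤ dist x2 s1) :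
    dist x1 x2 ≤ 2 * dist ((2⁻¹ : ℝ) • (x1 + s1)) ((2⁻¹ : ℝ) • (x2 + s2)) := by
  have key : 0 ≤ ⟪x1 - x2, s1 - s2⟫ := by
    have e1 : ‖x1 - s1‖ ^ 2 ≤ ‖x1 - s2‖ ^ 2 := by
      rw [dist_eq_norm, dist_eq_norm] at h1
      exact pow_le_pow_left₀ (norm_nonneg _) h1 2
    have e2 : ‖x2 - s2‖ ^ 2 ≤ ‖x2 - s1‖ ^ 2 := by
      rw [dist_eq_norm, dist_eq_norm] at h2
      exact pow_le_pow_left₀ (norm_nonneg _) h2 2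
    have r1 : x1 - s2 = (x1 - s1) + (s1 - s2) := by abel
    have r2 : x2 - s1 = (x2 - s2) - (s1 - s2) := by abel
    rw [r1, norm_add_sq_real] at e1
    rw [r2, norm_sub_sq_real (x2 - s2) (s1 - s2)] at e2
    have ru : x1 - x2 = (x1 - s1) - (x2 - s2) + (s1 - s2) := by abel
    rw [ru, inner_add_left, inner_sub_left, real_inner_self_eq_norm_sq]
    nlinarith [e1, e2]
  rw [dist_eq_norm, dist_eq_norm, ← smul_sub, norm_smul]
  have hd : (x1 + s1) - (x2 + s2) = (x1 - x2) + (s1 - s2) := by abel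
  rw [hd]
  have hsq : ‖x1 - x2‖ ^ 2 ≤ ‖(x1 - x2) + (s1 - s2)‖ ^ 2 := by
    rw [norm_add_sq_real]
    nlinarith [sq_nonneg ‖s1 - s2‖, key]
  have hle : ‖x1 - x2‖ ≤ ‖(x1 - x2) + (s1 - s2)‖ := by
    have := Real.sqrt_le_sqrt hsq
    rwa [Real.sqrt_sq (norm_nonneg _), Real.sqrt_sq (norm_nonneg _)] at this
  have hn : ‖(2⁻¹ : ℝ)‖ = 2⁻¹ := Real.norm_of_nonneg (by norm_num)
  rw [hn]
  linarith

/-- If S ⊆ ℝ² is compact with polynomial parallel volume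
V(r) = μ(S) + L₀r + πr² for 0 ≤ r < R, then the distance D = dist(X,S) from a
uniform point X on B(S,R) \ S is absolutely continuous with density
f(r) = (L₀ + 2πr)/(L₀R + πR²) on [0,R): its CDF is the integral of f. -/
theorem stmt_2 (S : Set (EuclideanSpace ℝ (Fin 2)))
    (hS : IsCompact S) (hSne : S.Nonempty) (R L0 : ℝ) (hR : 0 < R) (hL0 : 0 < L0)
    (hvol : ∀ r : ℝ, 0 ≤ r → r < R →
      (volume (cthickening r S)).toReal = (volume S).toReal + L0 * r + π * r ^ 2)
    {Ω : Type*} [MeasurableSpace Ω] (P : Measure Ω) [IsProbabilityMeasure P]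
    (X : Ω → EuclideanSpace ℝ (Fin 2)) (hX : Measurable X)
    (hunif : Measure.map X P
      = (volume (cthickening R S \ S))⁻¹ • volume.restrict (cthickening R S \ S)) :
    ∀ r, 0 ≤ r → r < R →
      (P {ω | infDist (X ω) S ≤ r}).toReal
        = ∫ t in (0:ℝ)..r, (L0 + 2 * π * t) / (L0 * R + π * R ^ 2) := by
  intro r hr1 hr2
  have hSmeas : MeasurableSet S := hS.isClosed.measurableSet
  have hSfin : volume S ≠ ⊤ := hS.measure_lt_top.ne
  set vS : ℝ := (volume S).toReal with hvS
  -- membership in cthickening via infDist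
  have mem_cth : ∀ (x : EuclideanSpace ℝ (Fin 2)) (ρ : ℝ), 0 ≤ ρ →
      (x ∈ cthickening ρ S ↔ infDist x S ≤ ρ) := by
    intro x ρ hρ
    rw [mem_cthickening_iff]
    constructor
    · intro h
      have h2 := ENNReal.toReal_mono ENNReal.ofReal_ne_top h
      rwa [ENNReal.toReal_ofReal hρ] at h2
    · intro h
      rw [← ENNReal.ofReal_toReal (infEdist_ne_top hSne)]
      exact ENNReal.ofReal_le_ofReal h
  -- Step A: measure of cthickening for ρ < R
  have keyA : ∀ ρ, 0 ≤ ρ → ρ < R →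
      volume (cthickening ρ S) = ENNReal.ofReal (vS + L0 * ρ + π * ρ ^ 2) := by
    intro ρ h1 h2
    have hfin : volume (cthickening ρ S) ≠ ⊤ := ((hS.cthickening).measure_lt_top).ne
    rw [← hvol ρ h1 h2, ENNReal.ofReal_toReal hfin]
  -- Step B: measure of thickening for 0 < ρ ≤ R
  have keyB : ∀ ρ, 0 < ρ → ρ ≤ R →
      volume (thickening ρ S) = ENNReal.ofReal (vS + L0 * ρ + π * ρ ^ 2) := by
    intro ρ h1 h2
    set u : ℕ → ℝ := fun n => ρ - ρ / (n + 2) with hu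
    have hu_nonneg : ∀ n : ℕ, 0 ≤ u n := by
      intro n
      have hd : ρ / ((n : ℝ) + 2) ≤ ρ := by
        rw [div_le_iff₀ (by positivity)]
        nlinarith [h1.le, Nat.cast_nonneg (α := ℝ) n]
      simp only [hu]
      linarith
    have hu_lt : ∀ n : ℕ, u n < ρ := by
      intro n
      have : 0 < ρ / ((n : ℝ) + 2) := by positivity
      simp only [hu]
      linarith
    have hu_mono : Monotone u := by
      intro a b hab
      simp only [hu]
      have hcast : (a : ℝ) ≤ (b : ℝ) := Nat.cast_le.2 hab
      have : ρ / ((b : ℝ) + 2) ≤ ρ / ((a : ℝ) + 2) :=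
        div_le_div_of_nonneg_left h1.le (by positivity) (by linarith)
      linarith
    have hu_tend : Tendsto u atTop (𝓝 ρ) := by
      have h0 : Tendsto (fun n : ℕ => ρ / ((n : ℝ) + 2)) atTop (𝓝 0) := by
        apply Tendsto.div_atTop tendsto_const_nhds
        exact tendsto_atTop_add_const_right _ _ tendsto_natCast_atTop_atTop
      have hc : Tendsto (fun _ : ℕ => ρ) atTop (𝓝 ρ) := tendsto_const_nhds
      simpa [hu] using hc.sub h0
    have hsets : thickening ρ S = ⋃ n, cthickening (u n) S := by
      apply Subset.antisymm
      · intro x hx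
        have hlt : infDist x S < ρ := (mem_thickening_iff_infDist_lt hSne).1 hx
        obtain ⟨n, hn⟩ := (hu_tend.eventually (eventually_ge_nhds hlt)).exists
        exact mem_iUnion.2 ⟨n, (mem_cth x (u n) (hu_nonneg n)).2 hn⟩
      · exact iUnion_subset fun n => cthickening_subset_thickening' h1 (hu_lt n) S
    have hmono : Monotone fun n => cthickening (u n) S :=
      fun a b hab => cthickening_mono (hu_mono hab) S
    have t1 : Tendsto (fun n => volume (cthickening (u n) S)) atTop
        (𝓝 (volume (⋃ n, cthickening (u n) S))) := tendsto_measure_iUnion_atTop hmono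
    have t2 : Tendsto (fun n => volume (cthickening (u n) S)) atTop
        (𝓝 (ENNReal.ofReal (vS + L0 * ρ + π * ρ ^ 2))) := by
      have heq : (fun n => volume (cthickening (u n) S))
          = fun n => ENNReal.ofReal (vS + L0 * u n + π * u n ^ 2) :=
        funext fun n => keyA (u n) (hu_nonneg n) ((hu_lt n).trans_le h2)
      rw [heq]
      apply ENNReal.tendsto_ofReal
      have : Tendsto (fun n => vS + L0 * u n + π * u n ^ 2) atTop
          (𝓝 (vS + L0 * ρ + π * ρ ^ 2)) := by
        apply Tendsto.add
        · exact tendsto_const_nhds.add (hu_tend.const_mul L0)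
        · exact (hu_tend.pow 2).const_mul π
      exact this
    rw [hsets]
    exact tendsto_nhds_unique t1 t2
  -- Step C: level sets below R are null
  have keyC : ∀ ρ, 0 < ρ → ρ < R →
      volume {x : EuclideanSpace ℝ (Fin 2) | infDist x S = ρ} = 0 := by
    intro ρ h1 h2
    have hset : {x : EuclideanSpace ℝ (Fin 2) | infDist x S = ρ}
        = cthickening ρ S \ thickening ρ S := by
      ext x
      simp only [mem_diff, mem_setOf_eq]
      rw [mem_cth x ρ h1.le, mem_thickening_iff_infDist_lt hSne]
      constructor
      · rintro rfl
        exact ⟨le_rfl, lt_irrefl _⟩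
      · rintro ⟨hle, hnlt⟩
        exact le_antisymm hle (not_lt.1 hnlt)
    rw [hset, measure_diff (thickening_subset_cthickening _ _)
      isOpen_thickening.measurableSet.nullMeasurableSet
      (by rw [keyB ρ h1 h2.le]; exact ENNReal.ofReal_ne_top),
      keyA ρ h1.le h2, keyB ρ h1 h2.le, tsub_self]
  -- Step D: the level set at R is null (midpoint contraction argument)
  have keyD : volume {x : EuclideanSpace ℝ (Fin 2) | infDist x S = R} = 0 := by
    set A := {x : EuclideanSpace ℝ (Fin 2) | infDist x S = R} with hA
    set sp : EuclideanSpace ℝ (Fin 2) → EuclideanSpace ℝ (Fin 2) :=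
      fun x => (hS.exists_infDist_eq_dist hSne x).choose with hspdef
    have hsmem : ∀ x, sp x ∈ S := fun x => (hS.exists_infDist_eq_dist hSne x).choose_spec.1
    have hsdist : ∀ x, infDist x S = dist x (sp x) :=
      fun x => (hS.exists_infDist_eq_dist hSne x).choose_spec.2
    set m : EuclideanSpace ℝ (Fin 2) → EuclideanSpace ℝ (Fin 2) :=
      fun x => (2⁻¹ : ℝ) • (x + sp x) with hm
    have hdxm : ∀ x ∈ A, dist x (m x) = R / 2 := by
      intro x hx
      have hd : dist x (sp x) = R := (hsdist x).symm.trans hx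
      have hrw : x - (2⁻¹ : ℝ) • (x + sp x) = (2⁻¹ : ℝ) • (x - sp x) := by
        rw [smul_sub, smul_add]
        module
      rw [hm]
      rw [dist_eq_norm, hrw, norm_smul]
      rw [dist_eq_norm] at hd
      rw [hd]
      norm_num
      ring
    have hmxs : ∀ x ∈ A, dist (m x) (sp x) = R / 2 := by
      intro x hx
      have hd : dist x (sp x) = R := (hsdist x).symm.trans hx
      have hrw : (2⁻¹ : ℝ) • (x + sp x) - sp x = (2⁻¹ : ℝ) • (x - sp x) := by
        rw [smul_sub, smul_add]
        module
      rw [hm]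
      rw [dist_eq_norm, hrw, norm_smul]
      rw [dist_eq_norm] at hd
      rw [hd]
      norm_num
      ring
    have hmA : ∀ x ∈ A, infDist (m x) S = R / 2 := by
      intro x hx
      have hxr : infDist x S = R := hx
      apply le_antisymm
      · calc infDist (m x) S ≤ dist (m x) (sp x) := infDist_le_dist_of_mem (hsmem x)
        _ = R / 2 := hmxs x hx
      · have hlip : infDist x S ≤ infDist (m x) S + dist x (m x) :=
          infDist_le_infDist_add_dist
        rw [hxr, hdxm x hx] at hlip
        linarith
    have hexp : ∀ x1 ∈ A, ∀ x2 ∈ A, dist x1 x2 ≤ 2 * dist (m x1) (m x2) := by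
      intro x1 h1 x2 h2
      apply midpoint_expand
      · rw [← hsdist x1]
        exact infDist_le_dist_of_mem (hsmem x2)
      · rw [← hsdist x2]
        exact infDist_le_dist_of_mem (hsmem x1)
    have hinj : Set.InjOn m A := by
      intro x1 h1 x2 h2 heq
      have := hexp x1 h1 x2 h2
      rw [heq, dist_self, mul_zero] at this
      exact dist_le_zero.1 this
    set g := Function.invFunOn m A with hg
    have hgl : LipschitzOnWith 2 g (m '' A) := by
      apply LipschitzOnWith.of_dist_le_mul
      rintro y1 ⟨x1, hx1, rfl⟩ y2 ⟨x2, hx2, rfl⟩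
      have e1 : g (m x1) = x1 := hinj.leftInvOn_invFunOn hx1
      have e2 : g (m x2) = x2 := hinj.leftInvOn_invFunOn hx2
      rw [e1, e2]
      push_cast
      exact hexp x1 hx1 x2 hx2
    obtain ⟨G, hGl, hGeq⟩ := hgl.extend_finite_dimension
    have hAsub : A ⊆ G '' (m '' A) := by
      intro x hx
      refine ⟨m x, mem_image_of_mem _ hx, ?_⟩
      rw [← hGeq (mem_image_of_mem _ hx)]
      exact hinj.leftInvOn_invFunOn hx
    have hnull : volume (m '' A) = 0 := by
      apply measure_mono_null _ (keyC (R/2) (by linarith) (by linarith))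
      rintro y ⟨x, hx, rfl⟩
      exact hmA x hx
    exact measure_mono_null hAsub (lipschitzWith_image_null volume hGl hnull)
  -- Step E: measure of cthickening at R
  have keyE : volume (cthickening R S) = ENNReal.ofReal (vS + L0 * R + π * R ^ 2) := by
    apply le_antisymm
    · have hsub : cthickening R S ⊆ thickening R S ∪
          {x : EuclideanSpace ℝ (Fin 2) | infDist x S = R} := by
        intro x hx
        rcases lt_or_eq_of_le ((mem_cth x R hR.le).1 hx) with h | h
        · exact Or.inl ((mem_thickening_iff_infDist_lt hSne).2 h)
        · exact Or.inr h
      calc volume (cthickening R S) ≤ volume (thickening R S ∪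
          {x : EuclideanSpace ℝ (Fin 2) | infDist x S = R}) := measure_mono hsub
        _ ≤ volume (thickening R S) +
            volume {x : EuclideanSpace ℝ (Fin 2) | infDist x S = R} := measure_union_le _ _
        _ = ENNReal.ofReal (vS + L0 * R + π * R ^ 2) := by
            rw [keyD, add_zero, keyB R hR le_rfl]
    · rw [← keyB R hR le_rfl]
      exact measure_mono (thickening_subset_cthickening _ _)
  -- difference measures
  have hdiff : ∀ ρ, 0 ≤ ρ →
      volume (cthickening ρ S) = ENNReal.ofReal (vS + L0 * ρ + π * ρ ^ 2) →
      volume (cthickening ρ S \ S) = ENNReal.ofReal (L0 * ρ + π * ρ ^ 2) := by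
    intro ρ h1 h2
    have hp : 0 ≤ L0 * ρ + π * ρ ^ 2 := by positivity
    rw [measure_diff (self_subset_cthickening S) hSmeas.nullMeasurableSet hSfin, h2]
    have hre : vS + L0 * ρ + π * ρ ^ 2 = vS + (L0 * ρ + π * ρ ^ 2) := by ring
    rw [hre, ENNReal.ofReal_add ENNReal.toReal_nonneg hp,
      ENNReal.ofReal_toReal hSfin, ENNReal.add_sub_cancel_left hSfin]
  -- final assembly
  have hvolD : volume (cthickening R S \ S) = ENNReal.ofReal (L0 * R + π * R ^ 2) :=
    hdiff R hR.le keyE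
  have hvolr : volume (cthickening r S \ S) = ENNReal.ofReal (L0 * r + π * r ^ 2) :=
    hdiff r hr1 (keyA r hr1 hr2)
  have hpre : {ω | infDist (X ω) S ≤ r} = X ⁻¹' (cthickening r S) := by
    ext ω
    simp only [mem_setOf_eq, mem_preimage]
    exact (mem_cth (X ω) r hr1).symm
  have hcap : cthickening r S ∩ (cthickening R S \ S) = cthickening r S \ S := by
    apply Subset.antisymm
    · rintro x ⟨hx1, _, hx3⟩
      exact ⟨hx1, hx3⟩
    · rintro x ⟨hx1, hx2⟩
      exact ⟨hx1, cthickening_mono hr2.le S hx1, hx2⟩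
  have hPm : P {ω | infDist (X ω) S ≤ r}
      = (ENNReal.ofReal (L0 * R + π * R ^ 2))⁻¹ * ENNReal.ofReal (L0 * r + π * r ^ 2) := by
    rw [hpre, ← Measure.map_apply hX isClosed_cthickening.measurableSet, hunif,
      Measure.smul_apply, Measure.restrict_apply isClosed_cthickening.measurableSet,
      smul_eq_mul, hvolD, hcap, hvolr]
  have hpR : 0 < L0 * R + π * R ^ 2 := by positivity
  have hpr : 0 ≤ L0 * r + π * r ^ 2 := by positivity
  rw [hPm, ENNReal.toReal_mul, ENNReal.toReal_inv, ENNReal.toReal_ofReal hpR.le,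
    ENNReal.toReal_ofReal hpr]
  rw [intervalIntegral.integral_div]
  have hint : (∫ t in (0:ℝ)..r, (L0 + 2 * π * t)) = L0 * r + π * r ^ 2 := by
    have hig : IntervalIntegrable (fun t : ℝ => 2 * π * t) volume 0 r :=
      Continuous.intervalIntegrable (by fun_prop) _ _
    rw [intervalIntegral.integral_add intervalIntegrable_const hig]
    have h2 : (∫ t in (0:ℝ)..r, 2 * π * t) = 2 * π * (r ^ 2 / 2) := by
      rw [intervalIntegral.integral_const_mul]
      simp [integral_id]
    rw [h2, intervalIntegral.integral_const]
    simp only [smul_eq_mul, sub_zero]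
    ring
  rw [hint, div_eq_mul_inv]
  ring
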